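/- A finite field extension L/K is Galois if and only if the subalgebra of End_K(L) generated by L (via multiplications) and Aut_K(L) equals all of End_K(L). -/

import Mathlib

/-- A finite field extension `L/K` is Galois if and only if the subalgebra of
`End_K(L)` generated by the multiplication operators and `Aut_K(L)` is all of
`End_K(L)`. -/
theorem stmt10 (K L : Type*) [Field K] [Field L] [Algebra K L] [FiniteDimensional K L] :
    IsGalois K L ↔
      Algebra.adjoin K (Set.range ⇑(Algebra.lmul K L) ∪
        Set.range fun g : L ≃ₐ[K] L => (g.toLinearMap : L →ₗ[K] L)) = ⊤ := by
  constructor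
  · intro hgal
    -- The automorphisms, as K-linear maps, are L-linearly independent (Dedekind).
    have hli : LinearIndependent L (fun g : L ≃ₐ[K] L => (g.toLinearMap : L →ₗ[K] L)) := by
      have := (linearIndependent_toLinearMap K L L).comp
        (fun g : L ≃ₐ[K] L => (g : L →ₐ[K] L))
        (fun g₁ g₂ h => by
          ext x
          exact congrArg (fun f : L →ₐ[K] L => f x) h)
      exact this
    have hcard : Fintype.card (L ≃ₐ[K] L) = Module.finrank L (L →ₗ[K] L) := by
      rw [Module.finrank_linearMap_self, ← Nat.card_eq_fintype_card, IsGalois.card_aut_eq_finrank]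
    have hspan : Submodule.span L
        (Set.range fun g : L ≃ₐ[K] L => (g.toLinearMap : L →ₗ[K] L)) = ⊤ :=
      hli.span_eq_top_of_card_eq_finrank hcard
    rw [eq_top_iff]
    rintro f -
    have hf : f ∈ Submodule.span L
        (Set.range fun g : L ≃ₐ[K] L => (g.toLinearMap : L →ₗ[K] L)) := by
      rw [hspan]; trivial
    induction hf using Submodule.span_induction with
    | mem g hg => exact Algebra.subset_adjoin (Set.mem_union_right _ hg)
    | zero => exact Subalgebra.zero_mem _
    | add x y _ _ hx hy => exact Subalgebra.add_mem _ hx hy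
    | smul a x _ hx =>
      have heq : a • x = (Algebra.lmul K L a) * x := by
        ext v
        show a • x v = Algebra.lmul K L a (x v)
        rw [smul_eq_mul]
        rfl
      rw [heq]
      exact Subalgebra.mul_mem _
        (Algebra.subset_adjoin (Set.mem_union_left _ ⟨a, rfl⟩)) hx
  · intro h
    apply IsGalois.of_fixedField_eq_bot
    rw [eq_bot_iff]
    intro c hc
    rw [IntermediateField.mem_bot]
    -- Every K-linear endomorphism commutes with multiplication by `c`.
    have key : ∀ f : Module.End K L, ∀ x, f (c * x) = c * f x := by
      have main : ∀ f ∈ Algebra.adjoin K (Set.range ⇑(Algebra.lmul K L) ∪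
          Set.range fun g : L ≃ₐ[K] L => (g.toLinearMap : L →ₗ[K] L)),
          ∀ x, f (c * x) = c * f x := by
        intro f hf
        induction hf using Algebra.adjoin_induction with
        | mem g hg =>
          rcases hg with ⟨a, rfl⟩ | ⟨σ, rfl⟩
          · intro x; simp; ring
          · intro x
            have hσc : σ c = c := hc ⟨σ, trivial⟩
            simp [map_mul, hσc]
        | algebraMap k =>
          intro x
          simp [Module.algebraMap_end_apply, Algebra.mul_smul_comm]
        | add f g _ _ hf hg => intro x; simp [hf, hg]; ring
        | mul f g _ _ hf hg => intro x; simp [Module.End.mul_apply, hg, hf]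
      intro f
      exact main f (h ▸ Algebra.mem_top)
    -- Deduce `c` lies in the span of `1`.
    by_contra hnc
    have hc1 : c ∉ Submodule.span K ({(1 : L)} : Set L) := by
      intro hmem
      rcases Submodule.mem_span_singleton.1 hmem with ⟨k, hk⟩
      exact hnc ⟨k, by rw [Algebra.algebraMap_eq_smul_one, hk]⟩
    set p := Submodule.span K ({(1 : L)} : Set L) with hp
    have hcq : (Submodule.Quotient.mk c : L ⧸ p) ≠ 0 := by
      intro h0
      exact hc1 ((Submodule.Quotient.mk_eq_zero p).1 h0)
    have : ¬ ∀ φ : Module.Dual K (L ⧸ p), φ (Submodule.Quotient.mk c) = 0 := by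
      rw [Module.forall_dual_apply_eq_zero_iff]; exact hcq
    push_neg at this
    obtain ⟨φ, hφ⟩ := this
    set f : Module.End K L :=
      (Algebra.linearMap K L) ∘ₗ (φ ∘ₗ p.mkQ) with hfdef
    have h1 : f 1 = 0 := by
      have : (1 : L) ∈ p := Submodule.mem_span_singleton_self _
      simp [hfdef, Submodule.mkQ_apply, (Submodule.Quotient.mk_eq_zero p).2 this]
    have h2 : f c = 0 := by
      have := key f 1
      rwa [mul_one, h1, mul_zero] at this
    have h3 : f c = algebraMap K L (φ (Submodule.Quotient.mk c)) := by
      simp [hfdef, Submodule.mkQ_apply]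
    rw [h3] at h2
    exact hφ ((algebraMap K L).injective (h2.trans (map_zero _).symm))
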